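/- Sequential composition: if mechanism K₁ : D^n → R₁ is (ε₁, δ₁)-differentially private and for each r ∈ R₁ the mechanism K₂(·, r) : D^n → R₂ is (ε₂, δ₂)-differentially private, then the composed mechanism x ↦ (K₁(x), K₂(x, K₁(x))) is (ε₁ + ε₂, δ₁ + δ₂)-differentially private. -/

import Mathlib

open MeasureTheory Real Classical

/-- Two databases are neighbors if they differ in exactly one entry. -/
def Neighbor {D : Type*} {n : ℕ} (x y : Fin n → D) : Prop :=
  (Finset.univ.filter (fun i => x i ≠ y i)).card = 1

/-- A randomized mechanism `K` is `(ε, δ)`-differentially private. -/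
def DiffPriv {D : Type*} {n : ℕ} {R : Type*} [MeasurableSpace R]
    (K : (Fin n → D) → Measure R) (ε δ : ℝ) : Prop :=
  ∀ x y : Fin n → D, Neighbor x y → ∀ S : Set R, MeasurableSet S →
    K x S ≤ ENNReal.ofReal (Real.exp ε) * K y S + ENNReal.ofReal δ

section DPhelpers
open Set ENNReal

lemma dp_lintegral {α : Type*} [MeasurableSpace α] (μ ν : Measure α)
    [IsFiniteMeasure μ] [IsFiniteMeasure ν]
    (c d : ℝ≥0∞)
    (hcond : ∀ T : Set α, MeasurableSet T → μ T ≤ c * ν T + d)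
    (h : α → ℝ≥0∞) (hm : Measurable h) (hb : ∀ a, h a ≤ 1) :
    ∫⁻ a, h a ∂μ ≤ c * ∫⁻ a, h a ∂ν + d := by
  set f : α → ℝ := fun a => (h a).toReal with hf
  have hfm : Measurable f := hm.ennreal_toReal
  have hfnn : ∀ a, 0 ≤ f a := fun a => ENNReal.toReal_nonneg
  have hfle : ∀ a, f a ≤ 1 := fun a => by
    simpa using ENNReal.toReal_mono one_ne_top (hb a)
  have hofr : ∀ a, ENNReal.ofReal (f a) = h a := fun a =>
    ENNReal.ofReal_toReal (lt_of_le_of_lt (hb a) one_lt_top).ne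
  have key : ∀ (ρ : Measure α), ∫⁻ a, h a ∂ρ = ∫⁻ t in Ioi (0:ℝ), ρ {a | t < f a} := by
    intro ρ
    rw [← lintegral_eq_lintegral_meas_lt ρ (Filter.Eventually.of_forall hfnn) hfm.aemeasurable]
    exact lintegral_congr fun a => (hofr a).symm
  rw [key μ, key ν]
  have hbound : ∀ t ∈ Ioi (0:ℝ),
      μ {a | t < f a} ≤ c * ν {a | t < f a} + (Ioc (0:ℝ) 1).indicator (fun _ => d) t := by
    intro t ht
    by_cases h1 : t ≤ 1
    · rw [Set.indicator_of_mem (Set.mem_Ioc.mpr ⟨ht, h1⟩)]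
      exact hcond _ (measurableSet_lt measurable_const hfm)
    · have : {a | t < f a} = ∅ := by
        ext a
        simp only [Set.mem_setOf_eq, Set.mem_empty_iff_false, iff_false, not_lt]
        exact (hfle a).trans (le_of_lt (lt_of_not_ge h1))
      simp [this]
  calc ∫⁻ t in Ioi (0:ℝ), μ {a | t < f a}
      ≤ ∫⁻ t in Ioi (0:ℝ), (c * ν {a | t < f a} + (Ioc (0:ℝ) 1).indicator (fun _ => d) t) :=
        setLIntegral_mono' measurableSet_Ioi hbound
    _ = c * (∫⁻ t in Ioi (0:ℝ), ν {a | t < f a})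
          + ∫⁻ t in Ioi (0:ℝ), (Ioc (0:ℝ) 1).indicator (fun _ => d) t := by
        have hνm : Measurable fun t : ℝ => ν {a | t < f a} := by
          have : Antitone fun t : ℝ => ν {a | t < f a} := fun s t hst =>
            measure_mono fun a ha => lt_of_le_of_lt hst ha
          exact this.measurable
        rw [lintegral_add_right _ ((measurable_const (a := d)).indicator measurableSet_Ioc),
          lintegral_const_mul c hνm]
    _ ≤ c * (∫⁻ t in Ioi (0:ℝ), ν {a | t < f a}) + d := by
        gcongr
        rw [lintegral_indicator measurableSet_Ioc, setLIntegral_const,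
          Measure.restrict_apply measurableSet_Ioc,
          Set.inter_eq_left.mpr Ioc_subset_Ioi_self, Real.volume_Ioc]
        simp

open ProbabilityTheory in
lemma kernel_slice_measurable {R₁ R₂ : Type*} [MeasurableSpace R₁] [MeasurableSpace R₂]
    (κ : R₁ → Measure R₂) (hκ : Measurable κ) (hκp : ∀ r, IsProbabilityMeasure (κ r))
    {S : Set (R₁ × R₂)} (hS : MeasurableSet S) :
    Measurable fun r => κ r (Prod.mk r ⁻¹' S) := by
  let K : Kernel R₁ R₂ := ⟨κ, hκ⟩
  haveI : IsMarkovKernel K := ⟨fun r => hκp r⟩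
  exact Kernel.measurable_kernel_prodMk_left (κ := K) hS
end DPhelpers

/-- Sequential composition: if `K₁` is `(ε₁, δ₁)`-DP and, for each possible
output `r` of `K₁`, the mechanism `K₂(·, r)` is `(ε₂, δ₂)`-DP, then the
composed mechanism `x ↦ (K₁(x), K₂(x, K₁(x)))` is `(ε₁+ε₂, δ₁+δ₂)`-DP. -/
theorem sequential_composition {D : Type*} {n : ℕ}
    {R₁ R₂ : Type*} [MeasurableSpace R₁] [MeasurableSpace R₂]
    (K₁ : (Fin n → D) → Measure R₁) (K₂ : (Fin n → D) → R₁ → Measure R₂)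
    (ε₁ ε₂ δ₁ δ₂ : ℝ) (hε₁ : 0 ≤ ε₁) (hε₂ : 0 ≤ ε₂) (hδ₁ : 0 ≤ δ₁) (hδ₂ : 0 ≤ δ₂)
    (hprob₁ : ∀ x, IsProbabilityMeasure (K₁ x))
    (hprob₂ : ∀ x r, IsProbabilityMeasure (K₂ x r))
    (hmeas : ∀ x, Measurable (K₂ x))
    (h₁ : DiffPriv K₁ ε₁ δ₁)
    (h₂ : ∀ r : R₁, DiffPriv (fun x => K₂ x r) ε₂ δ₂) :
    DiffPriv (fun x => (K₁ x).bind (fun r => (K₂ x r).map (fun s => (r, s))))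
      (ε₁ + ε₂) (δ₁ + δ₂) := by
  intro x y hxy S hS
  haveI := hprob₁ x; haveI := hprob₁ y
  set E₁ := ENNReal.ofReal (Real.exp ε₁) with hE₁
  set E₂ := ENNReal.ofReal (Real.exp ε₂) with hE₂
  set D₁ := ENNReal.ofReal δ₁ with hD₁
  set D₂ := ENNReal.ofReal δ₂ with hD₂
  set gx : R₁ → ENNReal := fun r => K₂ x r (Prod.mk r ⁻¹' S) with hgx
  set gy : R₁ → ENNReal := fun r => K₂ y r (Prod.mk r ⁻¹' S) with hgy
  have hgxm : Measurable gx := kernel_slice_measurable _ (hmeas x) (hprob₂ x) hS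
  have hgym : Measurable gy := kernel_slice_measurable _ (hmeas y) (hprob₂ y) hS
  -- rewrite the bind as an integral
  have hbind : ∀ (z : Fin n → D),
      ((K₁ z).bind (fun r => (K₂ z r).map (fun s => (r, s)))) S
        = ∫⁻ r, K₂ z r (Prod.mk r ⁻¹' S) ∂(K₁ z) := by
    intro z
    have hFm : Measurable fun r => (K₂ z r).map (fun s => (r, s)) := by
      apply Measure.measurable_of_measurable_coe
      intro T hT
      have : (fun r => ((K₂ z r).map (fun s => (r, s))) T)
          = fun r => K₂ z r (Prod.mk r ⁻¹' T) := by
        funext r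
        exact Measure.map_apply measurable_prodMk_left hT
      rw [this]
      exact kernel_slice_measurable _ (hmeas z) (hprob₂ z) hT
    rw [Measure.bind_apply hS hFm.aemeasurable]
    exact lintegral_congr fun r => Measure.map_apply measurable_prodMk_left hS
  simp only
  rw [hbind x, hbind y]
  set h : R₁ → ENNReal := fun r => min 1 (E₂ * gy r) with hh
  have hhm : Measurable h := measurable_const.min (hgym.const_mul E₂)
  have hA : ∀ r, gx r ≤ h r + D₂ := by
    intro r
    have h1 : gx r ≤ 1 := prob_le_one
    have h2 : gx r ≤ E₂ * gy r + D₂ :=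
      h₂ r x y hxy (Prod.mk r ⁻¹' S) (measurable_prodMk_left hS)
    calc gx r ≤ min 1 (E₂ * gy r + D₂) := le_min h1 h2
      _ ≤ min (1 + D₂) (E₂ * gy r + D₂) := min_le_min (self_le_add_right _ _) le_rfl
      _ = h r + D₂ := by rw [hh]; exact min_add_add_right 1 (E₂ * gy r) D₂
  calc ∫⁻ r, gx r ∂(K₁ x)
      ≤ ∫⁻ r, (h r + D₂) ∂(K₁ x) := lintegral_mono hA
    _ = (∫⁻ r, h r ∂(K₁ x)) + D₂ := by
        rw [lintegral_add_right _ measurable_const, lintegral_const, measure_univ, mul_one]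
    _ ≤ (E₁ * ∫⁻ r, h r ∂(K₁ y) + D₁) + D₂ := by
        gcongr
        exact dp_lintegral (K₁ x) (K₁ y) E₁ D₁ (fun T hT => h₁ x y hxy T hT) h hhm
          (fun r => min_le_left _ _)
    _ ≤ (E₁ * (E₂ * ∫⁻ r, gy r ∂(K₁ y)) + D₁) + D₂ := by
        gcongr
        rw [← lintegral_const_mul E₂ hgym]
        exact lintegral_mono fun r => min_le_right _ _
    _ = ENNReal.ofReal (Real.exp (ε₁ + ε₂)) * (∫⁻ r, gy r ∂(K₁ y))
          + ENNReal.ofReal (δ₁ + δ₂) := by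
        rw [Real.exp_add, ENNReal.ofReal_mul (Real.exp_nonneg ε₁),
          ENNReal.ofReal_add hδ₁ hδ₂, ← hE₁, ← hE₂, ← hD₁, ← hD₂, mul_assoc, add_assoc]
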